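/- Let d be a positive integer. For every ε>0 there exists δ>0 such that for every countable graph G with all vertex degrees at most d and every δ-Følner probability measure p on V(G), there exists an ε-Følner subset H of V(G) contained in the support of p with p(H) > 1−ε. -/

import Mathlib

open scoped ENNReal
open MeasureTheory

namespace AFPaper

variable {V : Type*} {W : Type*}

/-- The ball of radius `r` around `x` in the graph `G`. -/
def gball (G : SimpleGraph V) (x : V) (r : ℕ) : Set V :=
  {y | G.Reachable x y ∧ G.dist x y ≤ r}

/-- All vertex degrees of `G` are at most `d`. -/
def DegLE (G : SimpleGraph V) (d : ℕ) : Prop :=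
  ∀ v : V, (G.neighborSet v).Finite ∧ (G.neighborSet v).ncard ≤ d

/-- The boundary of `F` inside the induced subgraph on the ambient set `L`:
vertices of `F` adjacent (in `G`) to some vertex of `L` outside `F`. -/
def boundaryIn (G : SimpleGraph V) (L F : Set V) : Set V :=
  {x ∈ F | ∃ y ∈ L \ F, G.Adj x y}

/-- The boundary of `F` in `G`. -/
def boundary (G : SimpleGraph V) (F : Set V) : Set V :=
  boundaryIn G Set.univ F

/-- `F` is an `ε`-Følner set with respect to the induced subgraph on `L`. -/
def IsFolnerIn (G : SimpleGraph V) (L : Set V) (ε : ℝ) (F : Set V) : Prop :=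
  F.Finite ∧ ((boundaryIn G L F).ncard : ℝ) < ε * (F.ncard : ℝ)

/-- `F` is an `ε`-Følner set in `G`. -/
def IsFolner (G : SimpleGraph V) (ε : ℝ) (F : Set V) : Prop :=
  IsFolnerIn G Set.univ ε F

/-- The set `F` has diameter at most `r` in `G`. -/
def DiamLE (G : SimpleGraph V) (r : ℕ) (F : Set V) : Prop :=
  ∀ x ∈ F, ∀ y ∈ F, G.Reachable x y ∧ G.dist x y ≤ r

/-- The connected component of `x` in the subgraph of `G` induced on `S`. -/
def componentIn (G : SimpleGraph V) (S : Set V) (x : V) : Set V :=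
  {y | ∃ (hx : x ∈ S) (hy : y ∈ S), (G.induce S).Reachable ⟨x, hx⟩ ⟨y, hy⟩}

/-- All connected components of the subgraph induced on `S` have size at most `k`. -/
def SmallComponents (G : SimpleGraph V) (S : Set V) (k : ℕ) : Prop :=
  ∀ x ∈ S, (componentIn G S x).Finite ∧ (componentIn G S x).ncard ≤ k

/-- A witness for Property A with accuracy `ε` and radius `r`. -/
def PropertyAWith (G : SimpleGraph V) (ε : ℝ) (r : ℕ) : Prop :=
  ∃ Θ : V → V → ℝ,
    (∀ x, (Function.support (Θ x)).Finite) ∧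
    (∀ x y, 0 ≤ Θ x y) ∧
    (∀ x, (∑ᶠ y, Θ x y) = 1) ∧
    (∀ x y, Θ x y ≠ 0 → y ∈ gball G x r) ∧
    (∀ x y, G.Adj x y → (∑ᶠ z, |Θ x z - Θ y z|) < ε)

/-- Property A for graphs. -/
def PropertyA (G : SimpleGraph V) : Prop :=
  ∀ ε : ℝ, 0 < ε → ∃ r : ℕ, 1 ≤ r ∧ PropertyAWith G ε r

/-- Uniform local amenability. -/
def UniformlyLocallyAmenable (G : SimpleGraph V) : Prop :=
  ∀ ε : ℝ, 0 < ε → ∃ k : ℕ, 0 < k ∧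
    ∀ L : Set V, L.Finite → L.Nonempty →
      ∃ M : Set V, M ⊆ L ∧ M.Nonempty ∧ M.ncard ≤ k ∧ IsFolnerIn G L ε M

/-- Local hyperfiniteness. -/
def LocallyHyperfinite (G : SimpleGraph V) : Prop :=
  ∀ ε : ℝ, 0 < ε → ∃ k : ℕ, 0 < k ∧
    ∀ L : Set V, L.Finite → L.Nonempty →
      ∃ L' : Set V, L' ⊆ L ∧ ((L'.ncard : ℝ) < ε * (L.ncard : ℝ)) ∧
        SmallComponents G (L \ L') k

/-- Weighted hyperfiniteness. -/
def WeightedHyperfinite (G : SimpleGraph V) : Prop :=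
  ∀ ε : ℝ, 0 < ε → ∃ k : ℕ, 0 < k ∧
    ∀ w : V → ℝ, (Function.support w).Finite → (∀ x, 0 ≤ w x) →
      ∃ L : Set V, (∑ᶠ x ∈ L, w x) ≤ ε * (∑ᶠ x, w x) ∧ SmallComponents G Lᶜ k

/-- `Y` is a `k`-separator: deleting `Y` leaves components of size at most `k`. -/
def IsSeparator (G : SimpleGraph V) (k : ℕ) (Y : Set V) : Prop :=
  SmallComponents G Yᶜ k

/-- The space of `k`-separators, as a subspace of `V → Bool` (product of discrete
spaces); its Borel σ-algebra coincides with the induced product σ-algebra used here. -/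
abbrev SepSpace (G : SimpleGraph V) (k : ℕ) :=
  {f : V → Bool // IsSeparator G k {x | f x = true}}

/-- Strong hyperfiniteness. -/
def StronglyHyperfinite (G : SimpleGraph V) : Prop :=
  ∀ ε : ℝ, 0 < ε → ∃ k : ℕ, 0 < k ∧
    ∃ μ : Measure (SepSpace G k), μ Set.univ = 1 ∧
      ∀ x : V, μ {Y : SepSpace G k | Y.1 x = true} < ENNReal.ofReal ε

/-- An `(ε,r)`-Følner packing, encoded as a partial equivalence relation
`p : V → V → Bool` ("being in the same member of the packing"); the classes are the
members of the packing, and `p x x = false` exactly when `x` is not covered. -/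
structure IsPacking (G : SimpleGraph V) (ε : ℝ) (r : ℕ) (p : V → V → Bool) : Prop where
  symm : ∀ x y, p x y = true → p y x = true
  trans : ∀ x y z, p x y = true → p y z = true → p x z = true
  folner : ∀ x, p x x = true → IsFolner G ε {y | p x y = true}
  diam : ∀ x, p x x = true → DiamLE G r {y | p x y = true}

/-- The space of `(ε,r)`-packings of `G`, as a subspace of `V → V → Bool`. -/
abbrev PackingSpace (G : SimpleGraph V) (ε : ℝ) (r : ℕ) :=
  {p : V → V → Bool // IsPacking G ε r p}

/-- Strong Følner hyperfiniteness. -/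
def StronglyFolnerHyperfinite (G : SimpleGraph V) : Prop :=
  ∀ ε : ℝ, 0 < ε → ∃ r : ℕ, 1 ≤ r ∧
    ∃ ν : Measure (PackingSpace G ε r), ν Set.univ = 1 ∧
      ∀ x : V, ENNReal.ofReal (1 - ε) < ν {P : PackingSpace G ε r | P.1 x x = true}

/-- A packing is a tiling when it covers every vertex. -/
def IsTiling (p : V → V → Bool) : Prop := ∀ x, p x x = true

/-- Strong almost finiteness. -/
def StronglyAlmostFinite (G : SimpleGraph V) : Prop :=
  ∀ ε : ℝ, 0 < ε → ∃ r : ℕ, 1 ≤ r ∧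
    ∃ ν : Measure (PackingSpace G ε r), ν Set.univ = 1 ∧
      ν {P : PackingSpace G ε r | IsTiling P.1} = 1 ∧
      ∀ x : V, ν {P : PackingSpace G ε r | x ∈ boundary G {y | P.1 x y = true}} <
        ENNReal.ofReal ε

/-- Almost finiteness: `V(G)` can be tiled by `ε`-Følner sets of diameter at most `r`. -/
def AlmostFinite (G : SimpleGraph V) : Prop :=
  ∀ ε : ℝ, 0 < ε → ∃ r : ℕ, ∃ T : Set (Set V),
    (∀ F ∈ T, IsFolner G ε F ∧ DiamLE G r F) ∧
    T.PairwiseDisjoint id ∧ ⋃₀ T = Set.univ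

/-- Uniform amenability. -/
def UniformlyAmenable (G : SimpleGraph V) : Prop :=
  ∀ ε : ℝ, 0 < ε → ∃ r : ℕ, ∀ x : V, ∃ F : Set V, F ⊆ gball G x r ∧ IsFolner G ε F

/-- The `r`-neighborhood of a set `L`. -/
def setBall (G : SimpleGraph V) (L : Set V) (r : ℕ) : Set V :=
  ⋃ x ∈ L, gball G x r

/-- The uniform Følner property. -/
def UniformlyFolner (G : SimpleGraph V) : Prop :=
  ∀ ε : ℝ, 0 < ε → ∃ r : ℕ, 1 < r ∧
    ∀ L : Set V, L.Finite → L.Nonempty →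
      ∃ H : Set V, L ⊆ H ∧ H ⊆ setBall G L r ∧ IsFolner G ε H

/-- The Følner sum `Σ_x Σ_{y ∼ x} |f(x) − f(y)|`. -/
noncomputable def FolnerSum (G : SimpleGraph V) (f : V → ℝ) : ℝ :=
  ∑ᶠ x, ∑ᶠ y ∈ G.neighborSet x, |f x - f y|

/-- `f` is an `ε`-Følner function. -/
def IsFolnerFun (G : SimpleGraph V) (ε : ℝ) (f : V → ℝ) : Prop :=
  (Function.support f).Finite ∧ (∀ x, 0 ≤ f x) ∧ f ≠ 0 ∧
    FolnerSum G f < ε * (∑ᶠ x, f x)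

/-- `f` is an `ε`-Følner probability measure. -/
def IsFolnerProb (G : SimpleGraph V) (ε : ℝ) (f : V → ℝ) : Prop :=
  IsFolnerFun G ε f ∧ (∑ᶠ x, f x) = 1

/-- Følner Property A. -/
def FolnerPropertyA (G : SimpleGraph V) : Prop :=
  ∀ ε : ℝ, 0 < ε → ∃ r : ℕ, 1 ≤ r ∧
    ∃ Θ : V → V → ℝ,
      (∀ x, IsFolnerProb G ε (Θ x)) ∧
      (∀ x y, Θ x y ≠ 0 → y ∈ gball G x r) ∧
      (∀ x y, G.Adj x y → (∑ᶠ z, |Θ x z - Θ y z|) < ε)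

/-- The collection of `ε`-Følner sets of diameter at most `r`. -/
def FolnerSets (G : SimpleGraph V) (ε : ℝ) (r : ℕ) : Set (Set V) :=
  {H | IsFolner G ε H ∧ DiamLE G r H}

/-- Fractional almost finiteness. -/
def FractionallyAlmostFinite (G : SimpleGraph V) : Prop :=
  ∀ ε : ℝ, 0 < ε → ∃ r : ℕ, 1 ≤ r ∧
    ∃ F : Set V → ℝ,
      (∀ H ∈ FolnerSets G ε r, 0 ≤ F H) ∧
      (∀ x : V, ∃ c : ℝ, 0 ≤ c ∧ c < ε ∧
        (∑ᶠ H ∈ {H ∈ FolnerSets G ε r | x ∈ H}, F H) = 1 - c) ∧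
      (∀ x : V, (∑ᶠ H ∈ {H ∈ FolnerSets G ε r | x ∈ boundary G H}, F H) < ε)

/-- Subexponential growth: `lim_{r→∞} sup_x log|B_r(x)|/r = 0`. -/
def SubexpGrowth (G : SimpleGraph V) : Prop :=
  ∀ ε : ℝ, 0 < ε → ∃ R : ℕ, ∀ r : ℕ, R ≤ r → ∀ x : V,
    Real.log ((gball G x r).ncard : ℝ) < ε * (r : ℝ)

/-- The rooted `r`-ball of `G` at `v` is rooted-isomorphic to the rooted `r`-ball of
`H` at `w`. -/
def BallIso (G : SimpleGraph V) (v : V) (H : SimpleGraph W) (w : W) (r : ℕ) : Prop :=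
  ∃ (hv : v ∈ gball G v r) (hw : w ∈ gball H w r)
    (φ : ↥(gball G v r) ≃ ↥(gball H w r)),
      φ ⟨v, hv⟩ = ⟨w, hw⟩ ∧
      ∀ a b : ↥(gball G v r), G.Adj ↑a ↑b ↔ H.Adj ↑(φ a) ↑(φ b)

/-- Neighborhood equivalence of graphs. -/
def NeighborhoodEquiv (G : SimpleGraph V) (H : SimpleGraph W) : Prop :=
  (∀ (r : ℕ) (v : V), ∃ w : W, BallIso G v H w r) ∧
  (∀ (r : ℕ) (w : W), ∃ v : V, BallIso H w G v r)

end AFPaper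

namespace AFPaper

/-- every δ-Følner probability measure contains an ε-Følner set of
measure more than 1 − ε in its support, for δ depending only on ε (and d). -/
theorem folnerProb_contains_folner_set (d : ℕ) (hd : 0 < d) :
    ∀ ε : ℝ, 0 < ε → ∃ δ : ℝ, 0 < δ ∧
      ∀ (V : Type) (_ : Countable V) (G : SimpleGraph V), DegLE G d →
        ∀ p : V → ℝ, IsFolnerProb G δ p →
          ∃ H : Set V, H ⊆ Function.support p ∧ IsFolner G ε H ∧
            1 - ε < ∑ᶠ x ∈ H, p x := by
  classical
  intro ε hε
  set ε' : ℝ := min ε 1 with hε'def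
  have hε'pos : 0 < ε' := lt_min hε one_pos
  have hε'le1 : ε' ≤ 1 := min_le_right _ _
  have hε'leε : ε' ≤ ε := min_le_left _ _
  refine ⟨ε' ^ 2 / 2, div_pos (pow_pos hε'pos 2) (by norm_num), ?_⟩
  intro V _ G hdeg p hp
  obtain ⟨⟨hfin, hpos, hne, hFS⟩, hsum⟩ := hp
  rw [hsum, mul_one] at hFS
  set S : Finset V := hfin.toFinset with hSdef
  have hmemS : ∀ x, x ∈ S ↔ p x ≠ 0 := fun x => by
    simp [hSdef, Function.mem_support]
  have hSpos : ∀ x ∈ S, 0 < p x := fun x hx =>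
    lt_of_le_of_ne (hpos x) (Ne.symm ((hmemS x).1 hx))
  have hNfin : ∀ x : V, (G.neighborSet x).Finite := fun x => (hdeg x).1
  set Nf : V → Finset V := fun x => (hNfin x).toFinset with hNfdef
  have hmemNf : ∀ x y, y ∈ Nf x ↔ G.Adj x y := fun x y => by
    simp [hNfdef]
  have hNfcoe : ∀ x, (↑(Nf x) : Set V) = G.neighborSet x := fun x => (hNfin x).coe_toFinset
  set l : List ℝ := (S.image p).sort (· ≤ ·) with hldef
  have hlmem : ∀ t, t ∈ l ↔ ∃ x ∈ S, p x = t := by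
    intro t
    rw [hldef, Finset.mem_sort]
    simp [Finset.mem_image]
  have hlpos : ∀ t ∈ l, 0 < t := by
    intro t ht
    obtain ⟨x, hx, rfl⟩ := (hlmem t).1 ht
    exact hSpos x hx
  have hlsort : l.Pairwise (· < ·) := by rw [hldef]; exact List.sortedLT_iff_pairwise.1 (Finset.sortedLT_sort _)
  set u : ℕ → ℝ := fun j =>
    if h : j - 1 < l.length ∧ 1 ≤ j then l.get ⟨j - 1, h.1⟩ else 0 with hudef
  have hu0 : u 0 = 0 := by simp [hudef]
  have huval : ∀ j, 1 ≤ j → ∀ (h : j - 1 < l.length), u j = l.get ⟨j - 1, h⟩ := by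
    intro j h1 h
    simp only [hudef]
    exact dif_pos ⟨h, h1⟩
  have humem : ∀ j, 1 ≤ j → j ≤ l.length → u j ∈ l := by
    intro j h1 h2
    rw [huval j h1 (by omega)]
    exact List.get_mem _ _
  have humono : ∀ j k, j < k → k ≤ l.length → u j < u k := by
    intro j k hjk hkm
    have hkv := huval k (by omega) (by omega)
    rcases Nat.eq_zero_or_pos j with rfl | hj1
    · rw [hu0, hkv]
      exact hlpos _ (List.get_mem _ _)
    · rw [huval j hj1 (by omega), hkv]
      exact hlsort.rel_get_of_lt (Fin.mk_lt_mk.mpr (by omega))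
  have humono' : ∀ j k, j ≤ k → k ≤ l.length → u j ≤ u k := by
    intro j k hjk hkm
    rcases eq_or_lt_of_le hjk with rfl | h
    · exact le_rfl
    · exact (humono j k h hkm).le
  have hupos : ∀ j, 1 ≤ j → j ≤ l.length → 0 < u j := fun j h1 h2 =>
    hlpos _ (humem j h1 h2)
  have hk : ∀ x : V, ∃ k, k ≤ l.length ∧ p x = u k := by
    intro x
    rcases eq_or_ne (p x) 0 with h | h
    · exact ⟨0, Nat.zero_le _, by rw [h, hu0]⟩
    · have hx : p x ∈ l := (hlmem (p x)).2 ⟨x, (hmemS x).2 h, rfl⟩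
      obtain ⟨i, hi⟩ := List.mem_iff_get.1 hx
      have hi2 : (i : ℕ) < l.length := i.isLt
      refine ⟨(i : ℕ) + 1, by omega, ?_⟩
      rw [← hi, huval ((i : ℕ) + 1) (by omega) (by omega)]
      exact congrArg l.get (Fin.ext rfl)
  have hcond : ∀ k, k ≤ l.length → ∀ j, j < l.length → (u (j + 1) ≤ u k ↔ j < k) := by
    intro k hkm j hjm
    constructor
    · intro h
      by_contra hc
      push_neg at hc
      exact absurd (humono k (j + 1) (by omega) (by omega)) (not_lt.2 h)
    · intro h
      exact humono' (j + 1) k (by omega) hkm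
  have htel : ∀ k, ∑ j ∈ Finset.range k, (u (j + 1) - u j) = u k := by
    intro k
    rw [Finset.sum_range_sub u, hu0, sub_zero]
  have hL1 : ∀ x : V, ∑ j ∈ Finset.range l.length,
      (if u (j + 1) ≤ p x then u (j + 1) - u j else 0) = p x := by
    intro x
    obtain ⟨k, hkm, hpx⟩ := hk x
    have h1 : ∀ j ∈ Finset.range l.length,
        (if u (j + 1) ≤ p x then u (j + 1) - u j else 0)
          = (if j < k then u (j + 1) - u j else 0) := by
      intro j hj
      rw [Finset.mem_range] at hj
      exact if_congr (by rw [hpx]; exact hcond k hkm j hj) rfl rfl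
    rw [Finset.sum_congr rfl h1, ← Finset.sum_range_add_sum_Ico _ hkm]
    have h2 : ∑ j ∈ Finset.range k, (if j < k then u (j + 1) - u j else 0) = u k := by
      rw [← htel k]
      exact Finset.sum_congr rfl fun j hj => if_pos (Finset.mem_range.1 hj)
    have h3 : ∑ j ∈ Finset.Ico k l.length, (if j < k then u (j + 1) - u j else 0) = 0 := by
      refine Finset.sum_eq_zero fun j hj => if_neg ?_
      rw [Finset.mem_Ico] at hj
      omega
    rw [h2, h3, add_zero, hpx]
  have hL2 : ∀ x y : V, ∑ j ∈ Finset.range l.length,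
      (if u (j + 1) ≤ p x ∧ ¬ u (j + 1) ≤ p y then u (j + 1) - u j else 0)
        ≤ |p x - p y| := by
    intro x y
    obtain ⟨a, ham, hpx⟩ := hk x
    obtain ⟨b, hbm, hpy⟩ := hk y
    have h1 : ∀ j ∈ Finset.range l.length,
        (if u (j + 1) ≤ p x ∧ ¬ u (j + 1) ≤ p y then u (j + 1) - u j else 0)
          = (if j ∈ Finset.Ico b a then u (j + 1) - u j else 0) := by
      intro j hj
      rw [Finset.mem_range] at hj
      refine if_congr ?_ rfl rfl
      rw [hpx, hpy, hcond a ham j hj, hcond b hbm j hj, Finset.mem_Ico]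
      omega
    rw [Finset.sum_congr rfl h1, Finset.sum_ite_mem]
    rcases le_or_gt b a with hba | hba
    · have hsub : Finset.range l.length ∩ Finset.Ico b a = Finset.Ico b a := by
        refine Finset.inter_eq_right.2 fun j hj => ?_
        rw [Finset.mem_Ico] at hj
        rw [Finset.mem_range]
        omega
      rw [hsub]
      have h4 := Finset.sum_range_add_sum_Ico (fun j => u (j + 1) - u j) hba
      rw [htel b, htel a] at h4
      have h5 : u b ≤ u a := humono' b a hba ham
      have h6 : ∑ j ∈ Finset.Ico b a, (u (j + 1) - u j) = u a - u b := by linarith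
      rw [h6, hpx, hpy]
      exact le_abs_self _
    · have h7 : Finset.Ico b a = ∅ := Finset.Ico_eq_empty (by omega)
      rw [h7, Finset.inter_empty, Finset.sum_empty]
      exact abs_nonneg _
  set F : ℕ → Finset V := fun j => S.filter (fun x => u (j + 1) ≤ p x) with hFdef
  set E : ℕ → ℝ := fun j => ∑ x ∈ S, ∑ y ∈ Nf x,
      (if u (j + 1) ≤ p x ∧ ¬ u (j + 1) ≤ p y then (1 : ℝ) else 0) with hEdef
  have hEnonneg : ∀ j, 0 ≤ E j := by
    intro j
    simp only [hEdef]
    refine Finset.sum_nonneg fun x _ => Finset.sum_nonneg fun y _ => by positivity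
  have hsumS : ∑ x ∈ S, p x = 1 := by
    rw [← hsum, finsum_eq_sum p hfin]
  have hgx : ∀ x : V, (∑ᶠ y ∈ G.neighborSet x, |p x - p y|) = ∑ y ∈ Nf x, |p x - p y| := by
    intro x
    rw [← hNfcoe x, finsum_mem_coe_finset]
  have hFolge : ∑ x ∈ S, ∑ y ∈ Nf x, |p x - p y| ≤ FolnerSum G p := by
    have hsupp : Function.support (fun x => ∑ y ∈ Nf x, |p x - p y|)
        ⊆ ↑(S ∪ S.biUnion Nf) := by
      intro x hx
      have hx' : ∑ y ∈ Nf x, |p x - p y| ≠ 0 := hx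
      obtain ⟨y, hy, hne0⟩ := Finset.exists_ne_zero_of_sum_ne_zero hx'
      have hxy : G.Adj x y := (hmemNf x y).1 hy
      rcases eq_or_ne (p x) 0 with h0 | h0
      · have hy0 : p y ≠ 0 := by
          intro h
          exact hne0 (by rw [h0, h, sub_zero, abs_zero])
        have hxNy : x ∈ Nf y := (hmemNf y x).2 hxy.symm
        exact Finset.mem_coe.2 (Finset.mem_union_right _
          (Finset.mem_biUnion.2 ⟨y, (hmemS y).2 hy0, hxNy⟩))
      · exact Finset.mem_coe.2 (Finset.mem_union_left _ ((hmemS x).2 h0))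
    have hFeq : FolnerSum G p = ∑ x ∈ S ∪ S.biUnion Nf, ∑ y ∈ Nf x, |p x - p y| := by
      unfold FolnerSum
      rw [finsum_congr hgx]
      exact finsum_eq_sum_of_support_subset _ hsupp
    rw [hFeq]
    refine Finset.sum_le_sum_of_subset_of_nonneg Finset.subset_union_left ?_
    intro x _ _
    exact Finset.sum_nonneg fun y _ => abs_nonneg _
  have hKB : ∑ j ∈ Finset.range l.length, (u (j + 1) - u j) * E j < ε' ^ 2 / 2 := by
    have h1 : ∑ j ∈ Finset.range l.length, (u (j + 1) - u j) * E j
        = ∑ x ∈ S, ∑ y ∈ Nf x, ∑ j ∈ Finset.range l.length,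
            (if u (j + 1) ≤ p x ∧ ¬ u (j + 1) ≤ p y then u (j + 1) - u j else 0) := by
      simp only [hEdef, Finset.mul_sum, mul_ite, mul_one, mul_zero]
      rw [Finset.sum_comm]
      exact Finset.sum_congr rfl fun x _ => Finset.sum_comm
    have h2 : ∑ x ∈ S, ∑ y ∈ Nf x, ∑ j ∈ Finset.range l.length,
            (if u (j + 1) ≤ p x ∧ ¬ u (j + 1) ≤ p y then u (j + 1) - u j else 0)
        ≤ ∑ x ∈ S, ∑ y ∈ Nf x, |p x - p y| :=
      Finset.sum_le_sum fun x _ => Finset.sum_le_sum fun y _ => hL2 x y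
    rw [h1]
    exact lt_of_le_of_lt (le_trans h2 hFolge) hFS
  have hKC : ∑ j ∈ Finset.range l.length, (u (j + 1) - u j) * ((F j).card : ℝ) = 1 := by
    have h1 : ∀ j, ((F j).card : ℝ) = ∑ x ∈ S, (if u (j + 1) ≤ p x then (1 : ℝ) else 0) := by
      intro j
      simp only [hFdef]
      exact (Finset.sum_boole _ _).symm
    calc ∑ j ∈ Finset.range l.length, (u (j + 1) - u j) * ((F j).card : ℝ)
        = ∑ j ∈ Finset.range l.length, ∑ x ∈ S,
            (if u (j + 1) ≤ p x then u (j + 1) - u j else 0) := by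
          refine Finset.sum_congr rfl fun j _ => ?_
          rw [h1 j, Finset.mul_sum]
          exact Finset.sum_congr rfl fun x _ => by rw [mul_ite, mul_one, mul_zero]
      _ = ∑ x ∈ S, ∑ j ∈ Finset.range l.length,
            (if u (j + 1) ≤ p x then u (j + 1) - u j else 0) := Finset.sum_comm
      _ = ∑ x ∈ S, p x := Finset.sum_congr rfl fun x _ => hL1 x
      _ = 1 := hsumS
  have hwnonneg : ∀ j, j < l.length → 0 ≤ (u (j + 1) - u j) * ((F j).card : ℝ) := by
    intro j hj
    exact mul_nonneg (sub_nonneg.2 (humono' j (j + 1) (by omega) (by omega)))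
      (Nat.cast_nonneg _)
  have hKD : ∀ j, j ≤ l.length → ∑ x ∈ S \ F j, p x
      ≤ ∑ k ∈ Finset.range j, (u (k + 1) - u k) * ((F k).card : ℝ) := by
    intro j hjm
    have hxval : ∀ x ∈ S \ F j, p x
        = ∑ k ∈ Finset.range j, (if u (k + 1) ≤ p x then u (k + 1) - u k else 0) := by
      intro x hx
      have hnot : ¬ u (j + 1) ≤ p x := by
        rw [Finset.mem_sdiff] at hx
        intro hc
        exact hx.2 (by simp only [hFdef]; exact Finset.mem_filter.2 ⟨hx.1, hc⟩)
      have hzero : ∑ k ∈ Finset.Ico j l.length,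
          (if u (k + 1) ≤ p x then u (k + 1) - u k else 0) = 0 := by
        refine Finset.sum_eq_zero fun k hkk => if_neg fun hc => hnot ?_
        rw [Finset.mem_Ico] at hkk
        exact le_trans (humono' (j + 1) (k + 1) (by omega) (by omega)) hc
      have h0 := hL1 x
      rw [← Finset.sum_range_add_sum_Ico _ hjm, hzero, add_zero] at h0
      exact h0.symm
    calc ∑ x ∈ S \ F j, p x
        = ∑ x ∈ S \ F j, ∑ k ∈ Finset.range j,
            (if u (k + 1) ≤ p x then u (k + 1) - u k else 0) :=
          Finset.sum_congr rfl hxval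
      _ = ∑ k ∈ Finset.range j, ∑ x ∈ S \ F j,
            (if u (k + 1) ≤ p x then u (k + 1) - u k else 0) := Finset.sum_comm
      _ ≤ ∑ k ∈ Finset.range j, (u (k + 1) - u k) * ((F k).card : ℝ) := by
          refine Finset.sum_le_sum fun k hkk => ?_
          rw [Finset.mem_range] at hkk
          have hdk : 0 ≤ u (k + 1) - u k :=
            sub_nonneg.2 (humono' k (k + 1) (by omega) (by omega))
          rw [← Finset.sum_filter, Finset.sum_const, nsmul_eq_mul]
          have hsub : (S \ F j).filter (fun x => u (k + 1) ≤ p x) ⊆ F k := by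
            intro x hx
            rw [Finset.mem_filter, Finset.mem_sdiff] at hx
            simp only [hFdef]
            exact Finset.mem_filter.2 ⟨hx.1.1, hx.2⟩
          have hcc : (((S \ F j).filter (fun x => u (k + 1) ≤ p x)).card : ℝ)
              ≤ ((F k).card : ℝ) := by
            exact_mod_cast Finset.card_le_card hsub
          calc (((S \ F j).filter (fun x => u (k + 1) ≤ p x)).card : ℝ) * (u (k + 1) - u k)
              ≤ ((F k).card : ℝ) * (u (k + 1) - u k) :=
                mul_le_mul_of_nonneg_right hcc hdk
            _ = (u (k + 1) - u k) * ((F k).card : ℝ) := mul_comm _ _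
  have hgood : ∃ j ∈ Finset.range l.length,
      E j < ε' * ((F j).card : ℝ) ∧
      ∑ k ∈ Finset.range j, (u (k + 1) - u k) * ((F k).card : ℝ) < ε' := by
    by_contra hcon
    push_neg at hcon
    have hcon' : ∀ j ∈ Finset.range l.length,
        ε' * ((F j).card : ℝ) ≤ E j ∨
        ε' ≤ ∑ k ∈ Finset.range j, (u (k + 1) - u k) * ((F k).card : ℝ) := by
      intro j hj
      rcases lt_or_ge (E j) (ε' * ((F j).card : ℝ)) with h | h
      · exact Or.inr (hcon j hj h)
      · exact Or.inl h
    set B1 : Finset ℕ := (Finset.range l.length).filter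
      (fun j => ε' * ((F j).card : ℝ) ≤ E j) with hB1def
    set B2 : Finset ℕ := (Finset.range l.length).filter
      (fun j => ε' ≤ ∑ k ∈ Finset.range j, (u (k + 1) - u k) * ((F k).card : ℝ)) with hB2def
    have hB1sum : ∑ j ∈ B1, (u (j + 1) - u j) * ((F j).card : ℝ) < ε' / 2 := by
      have h5 : ε' * ∑ j ∈ B1, (u (j + 1) - u j) * ((F j).card : ℝ)
          ≤ ∑ j ∈ Finset.range l.length, (u (j + 1) - u j) * E j := by
        rw [Finset.mul_sum]
        calc ∑ j ∈ B1, ε' * ((u (j + 1) - u j) * ((F j).card : ℝ))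
            ≤ ∑ j ∈ B1, (u (j + 1) - u j) * E j := by
              refine Finset.sum_le_sum fun j hj => ?_
              rw [hB1def, Finset.mem_filter, Finset.mem_range] at hj
              have hd0 : 0 ≤ u (j + 1) - u j :=
                sub_nonneg.2 (humono' j (j + 1) (by omega) (by omega))
              nlinarith [hj.2]
          _ ≤ ∑ j ∈ Finset.range l.length, (u (j + 1) - u j) * E j := by
              refine Finset.sum_le_sum_of_subset_of_nonneg (Finset.filter_subset _ _) ?_
              intro j hj _
              rw [Finset.mem_range] at hj
              exact mul_nonneg (sub_nonneg.2 (humono' j (j + 1) (by omega) (by omega)))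
                (hEnonneg j)
      have h6 : ε' * ∑ j ∈ B1, (u (j + 1) - u j) * ((F j).card : ℝ) < ε' * (ε' / 2) := by
        calc ε' * ∑ j ∈ B1, (u (j + 1) - u j) * ((F j).card : ℝ)
            ≤ ∑ j ∈ Finset.range l.length, (u (j + 1) - u j) * E j := h5
          _ < ε' ^ 2 / 2 := hKB
          _ = ε' * (ε' / 2) := by ring
      exact lt_of_mul_lt_mul_left h6 hε'pos.le
    have hB2sum : ∑ j ∈ B2, (u (j + 1) - u j) * ((F j).card : ℝ) ≤ 1 - ε' := by
      rcases B2.eq_empty_or_nonempty with he | hne2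
      · rw [he, Finset.sum_empty]
        linarith
      · obtain ⟨j₀, hj₀, hmin⟩ := B2.exists_min_image id hne2
        have hj₀' := Finset.mem_filter.1 hj₀
        have hj₀m : j₀ < l.length := Finset.mem_range.1 hj₀'.1
        have hsub : B2 ⊆ Finset.Ico j₀ l.length := by
          intro j hj
          have hjf := Finset.mem_filter.1 hj
          rw [Finset.mem_Ico]
          exact ⟨hmin j hj, Finset.mem_range.1 hjf.1⟩
        have h8 := Finset.sum_range_add_sum_Ico
          (fun j => (u (j + 1) - u j) * ((F j).card : ℝ)) hj₀m.le
        calc ∑ j ∈ B2, (u (j + 1) - u j) * ((F j).card : ℝ)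
            ≤ ∑ j ∈ Finset.Ico j₀ l.length, (u (j + 1) - u j) * ((F j).card : ℝ) := by
              refine Finset.sum_le_sum_of_subset_of_nonneg hsub ?_
              intro j hj _
              rw [Finset.mem_Ico] at hj
              exact hwnonneg j hj.2
          _ = 1 - ∑ k ∈ Finset.range j₀, (u (k + 1) - u k) * ((F k).card : ℝ) := by
              have := hKC
              beta_reduce at h8
              linarith
          _ ≤ 1 - ε' := by linarith [hj₀'.2]
    have hunion : Finset.range l.length ⊆ B1 ∪ B2 := by
      intro j hj
      rcases hcon' j hj with h | h
      · exact Finset.mem_union_left _ (Finset.mem_filter.2 ⟨hj, h⟩)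
      · exact Finset.mem_union_right _ (Finset.mem_filter.2 ⟨hj, h⟩)
    have hmemrange : ∀ j, j ∈ B1 ∪ B2 → j < l.length := by
      intro j hj
      rcases Finset.mem_union.1 hj with h | h
      · exact Finset.mem_range.1 (Finset.mem_filter.1 h).1
      · exact Finset.mem_range.1 (Finset.mem_filter.1 h).1
    have h7 : (1 : ℝ) ≤ ∑ j ∈ B1 ∪ B2, (u (j + 1) - u j) * ((F j).card : ℝ) := by
      rw [← hKC]
      refine Finset.sum_le_sum_of_subset_of_nonneg hunion ?_
      intro j hj _
      exact hwnonneg j (hmemrange j hj)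
    have h9 := Finset.sum_union_inter (s₁ := B1) (s₂ := B2)
      (f := fun j => (u (j + 1) - u j) * ((F j).card : ℝ))
    have h10 : 0 ≤ ∑ j ∈ B1 ∩ B2, (u (j + 1) - u j) * ((F j).card : ℝ) := by
      refine Finset.sum_nonneg fun j hj => ?_
      exact hwnonneg j (hmemrange j (Finset.mem_union_left _ (Finset.mem_inter.1 hj).1))
    linarith
  obtain ⟨j, hjR, hgE, hgA⟩ := hgood
  have hjm : j < l.length := Finset.mem_range.1 hjR
  have hupos1 : 0 < u (j + 1) := hupos (j + 1) (by omega) (by omega)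
  have hHF : {x : V | u (j + 1) ≤ p x} = ↑(F j) := by
    ext x
    simp only [Set.mem_setOf_eq, Finset.mem_coe, hFdef, Finset.mem_filter]
    constructor
    · intro h
      exact ⟨(hmemS x).2 (lt_of_lt_of_le hupos1 h).ne', h⟩
    · exact fun h => h.2
  have hymem : ∀ y : V, (y ∈ (↑(F j) : Set V)) ↔ u (j + 1) ≤ p y := by
    intro y
    rw [← hHF]
    exact Iff.rfl
  refine ⟨↑(F j), ?_, ?_, ?_⟩
  · intro x hx
    rw [Finset.mem_coe] at hx
    have hx2 : x ∈ S.filter (fun z => u (j + 1) ≤ p z) := by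
      simp only [hFdef] at hx
      exact hx
    have hxS : x ∈ S := (Finset.mem_filter.1 hx2).1
    exact (hmemS x).1 hxS
  · show ((↑(F j) : Set V)).Finite ∧
      ((boundaryIn G Set.univ (↑(F j) : Set V)).ncard : ℝ)
        < ε * (((↑(F j) : Set V)).ncard : ℝ)
    refine ⟨(F j).finite_toSet, ?_⟩
    have hbd : boundaryIn G Set.univ (↑(F j) : Set V)
        = ↑((F j).filter (fun x => ∃ y, ¬ u (j + 1) ≤ p y ∧ G.Adj x y)) := by
      ext x
      rw [Finset.mem_coe, Finset.mem_filter]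
      constructor
      · rintro ⟨hxF, y, hy, hadj⟩
        rw [Set.mem_diff] at hy
        exact ⟨Finset.mem_coe.1 hxF, y, fun hle => hy.2 ((hymem y).2 hle), hadj⟩
      · rintro ⟨hxF, y, hnle, hadj⟩
        exact ⟨Finset.mem_coe.2 hxF, y,
          ⟨Set.mem_univ y, fun hyF => hnle ((hymem y).1 hyF)⟩, hadj⟩
    have hBE : (((F j).filter (fun x => ∃ y, ¬ u (j + 1) ≤ p y ∧ G.Adj x y)).card : ℝ)
        ≤ E j := by
      have h1 : ∀ x ∈ (F j).filter (fun x => ∃ y, ¬ u (j + 1) ≤ p y ∧ G.Adj x y),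
          (1 : ℝ) ≤ ∑ y ∈ Nf x,
            (if u (j + 1) ≤ p x ∧ ¬ u (j + 1) ≤ p y then (1 : ℝ) else 0) := by
        intro x hx
        rw [Finset.mem_filter] at hx
        obtain ⟨hxF, y, hnle, hadj⟩ := hx
        have hxF2 : x ∈ S.filter (fun z => u (j + 1) ≤ p z) := by
          simp only [hFdef] at hxF
          exact hxF
        have hxcond : u (j + 1) ≤ p x := (Finset.mem_filter.1 hxF2).2
        have hyNf : y ∈ Nf x := (hmemNf x y).2 hadj
        have h2 := Finset.single_le_sum
          (f := fun z => if u (j + 1) ≤ p x ∧ ¬ u (j + 1) ≤ p z then (1 : ℝ) else 0)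
          (fun z _ => by positivity) hyNf
        calc (1 : ℝ)
            = (if u (j + 1) ≤ p x ∧ ¬ u (j + 1) ≤ p y then (1 : ℝ) else 0) :=
              (if_pos (And.intro hxcond hnle)).symm
          _ ≤ ∑ z ∈ Nf x,
              (if u (j + 1) ≤ p x ∧ ¬ u (j + 1) ≤ p z then (1 : ℝ) else 0) := h2
      calc (((F j).filter (fun x => ∃ y, ¬ u (j + 1) ≤ p y ∧ G.Adj x y)).card : ℝ)
          = ∑ _x ∈ (F j).filter (fun x => ∃ y, ¬ u (j + 1) ≤ p y ∧ G.Adj x y), (1 : ℝ) := by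
            rw [Finset.sum_const, nsmul_eq_mul, mul_one]
        _ ≤ ∑ x ∈ (F j).filter (fun x => ∃ y, ¬ u (j + 1) ≤ p y ∧ G.Adj x y),
              ∑ y ∈ Nf x, (if u (j + 1) ≤ p x ∧ ¬ u (j + 1) ≤ p y then (1 : ℝ) else 0) :=
            Finset.sum_le_sum h1
        _ ≤ E j := by
            simp only [hEdef]
            refine Finset.sum_le_sum_of_subset_of_nonneg ?_ ?_
            · intro x hx
              rw [Finset.mem_filter] at hx
              have hx2 : x ∈ S.filter (fun z => u (j + 1) ≤ p z) := by
                have := hx.1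
                simp only [hFdef] at this
                exact this
              exact (Finset.mem_filter.1 hx2).1
            · intro x _ _
              exact Finset.sum_nonneg fun y _ => by positivity
    rw [hbd, Set.ncard_coe_finset, Set.ncard_coe_finset]
    calc (((F j).filter (fun x => ∃ y, ¬ u (j + 1) ≤ p y ∧ G.Adj x y)).card : ℝ)
        ≤ E j := hBE
      _ < ε' * ((F j).card : ℝ) := hgE
      _ ≤ ε * ((F j).card : ℝ) := mul_le_mul_of_nonneg_right hε'leε (Nat.cast_nonneg _)
  · rw [finsum_mem_coe_finset]
    have hFsub : F j ⊆ S := by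
      simp only [hFdef]
      exact Finset.filter_subset _ _
    have hsd := Finset.sum_sdiff (f := p) hFsub
    have htail := hKD j hjm.le
    linarith


end AFPaper
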